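/- arXiv:1602.02128 — 4 statements merged into one kernel-verified Lean document; each statement's English description precedes it below -/
import Mathlib

section
/- Quantified interfacial entropy dissipation: let n ∈ ℝ^d be a unit vector and λ* > 0. Suppose G : Ω² → ℝ^m and ξ_num : Ω² → ℝ are such that for all (u,v) ∈ Ω²: u − (1/λ*)(G(u,v) − f(u)·n) ∈ Ω and ξ_num(u,v) − ξ(u)·n ≤ −λ*[η(u − (1/λ*)(G(u,v) − f(u)·n)) − η(u)]. Define X(u,v) = ξ(u)·n + Dη(u)(G(u,v) − f(u)·n). Then for all (u,v) ∈ Ω²: X(u,v) − ξ_num(u,v) ≥ (β₀/(2λ*)) |G(u,v) − f(u)·n|². -/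
open MeasureTheory Metric Set
set_option autoImplicit false
set_option maxHeartbeats 1000000
noncomputable section

/-- `Rs k` is the Euclidean space `ℝ^k`. -/
abbrev Rs (k : ℕ) : Type := EuclideanSpace ℝ (Fin k)


lemma strong_convex_lb {m : ℕ} (η : Rs m → ℝ) (V : Set (Rs m)) (hVo : IsOpen V)
    (hη : ContDiffOn ℝ 2 η V) (β₀ : ℝ) (S : Set (Rs m)) (hS : Convex ℝ S) (hSV : S ⊆ V)
    (hH : ∀ x ∈ S, ∀ w : Rs m, β₀ * ‖w‖ ^ (2:ℕ) ≤ fderiv ℝ (fderiv ℝ η) x w w)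
    (a b : Rs m) (ha : a ∈ S) (hb : b ∈ S) :
    η a + fderiv ℝ η a (b - a) + β₀ / 2 * ‖b - a‖ ^ (2:ℕ) ≤ η b := by
  set w : Rs m := b - a with hw
  set L : ℝ → Rs m := fun t => a + t • w with hLdef
  have hL : ∀ t : ℝ, HasDerivAt L w t := by
    intro t
    simpa [hLdef] using ((hasDerivAt_id t).smul_const w).const_add a
  have hLS : ∀ t ∈ Icc (0:ℝ) 1, L t ∈ S := fun t ht => hS.add_smul_sub_mem ha hb ht
  set U : Set ℝ := L ⁻¹' V with hUdef
  have hUo : IsOpen U := by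
    have hcont : Continuous L := by continuity
    exact hVo.preimage hcont
  have hIU : Icc (0:ℝ) 1 ⊆ U := fun t ht => hSV (hLS t ht)
  set g1 : ℝ → ℝ := fun t => fderiv ℝ η (L t) w with hg1def
  have hg : ∀ t ∈ U, HasDerivAt (fun t => η (L t)) (g1 t) t := by
    intro t ht
    exact (((hη.contDiffAt (hVo.mem_nhds ht)).differentiableAt
      (by norm_num)).hasFDerivAt).comp_hasDerivAt t (hL t)
  have hg1 : ∀ t ∈ U, HasDerivAt g1 (fderiv ℝ (fderiv ℝ η) (L t) w w) t := by
    intro t ht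
    have h2 : ContDiffAt ℝ 1 (fderiv ℝ η) (L t) :=
      (hη.contDiffAt (hVo.mem_nhds ht)).fderiv_right (by norm_num)
    have hd : HasDerivAt (fun s => fderiv ℝ η (L s)) (fderiv ℝ (fderiv ℝ η) (L t) w) t :=
      (h2.differentiableAt (by norm_num)).hasFDerivAt.comp_hasDerivAt t (hL t)
    simpa using hd.clm_apply (hasDerivAt_const t w)
  -- F and F'
  set F' : ℝ → ℝ := fun t => g1 t - g1 0 - β₀ * ‖w‖ ^ (2:ℕ) * t with hF'def
  set F : ℝ → ℝ := fun t => η (L t) - η (L 0) - t * g1 0 - β₀ / 2 * ‖w‖ ^ (2:ℕ) * t ^ 2 with hFdef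
  have hF : ∀ t ∈ U, HasDerivAt F (F' t) t := by
    intro t ht
    have h1 := (((hg t ht).sub_const (η (L 0))).sub ((hasDerivAt_id t).mul_const (g1 0))).sub
      (((hasDerivAt_pow 2 t)).const_mul (β₀ / 2 * ‖w‖ ^ (2:ℕ)))
    refine h1.congr_deriv ?_
    simp [hF'def]; ring
  have hF'd : ∀ t ∈ U, HasDerivAt F' (fderiv ℝ (fderiv ℝ η) (L t) w w - β₀ * ‖w‖ ^ (2:ℕ)) t := by
    intro t ht
    have h1 := (((hg1 t ht).sub_const (g1 0))).sub ((hasDerivAt_id t).const_mul (β₀ * ‖w‖ ^ (2:ℕ)))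
    refine h1.congr_deriv ?_
    ring
  -- F' is monotone on Icc 0 1
  have hF'mono : MonotoneOn F' (Icc 0 1) := by
    apply monotoneOn_of_deriv_nonneg (convex_Icc 0 1)
    · exact fun t ht => ((hF'd t (hIU ht)).continuousAt).continuousWithinAt
    · intro t ht
      rw [interior_Icc] at ht
      exact ((hF'd t (hIU (Ioo_subset_Icc_self ht))).differentiableAt).differentiableWithinAt
    · intro t ht
      rw [interior_Icc] at ht
      rw [(hF'd t (hIU (Ioo_subset_Icc_self ht))).deriv]
      have := hH (L t) (hLS t (Ioo_subset_Icc_self ht)) w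
      linarith
  have hF'0 : F' 0 = 0 := by simp [hF'def]
  have hF'nonneg : ∀ t ∈ Icc (0:ℝ) 1, 0 ≤ F' t := by
    intro t ht
    have := hF'mono (left_mem_Icc.mpr zero_le_one) ht ht.1
    rwa [hF'0] at this
  have hFmono : MonotoneOn F (Icc 0 1) := by
    apply monotoneOn_of_deriv_nonneg (convex_Icc 0 1)
    · exact fun t ht => ((hF t (hIU ht)).continuousAt).continuousWithinAt
    · intro t ht
      rw [interior_Icc] at ht
      exact ((hF t (hIU (Ioo_subset_Icc_self ht))).differentiableAt).differentiableWithinAt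
    · intro t ht
      rw [interior_Icc] at ht
      rw [(hF t (hIU (Ioo_subset_Icc_self ht))).deriv]
      exact hF'nonneg t (Ioo_subset_Icc_self ht)
  have hF0 : F 0 = 0 := by simp [hFdef]
  have hF1 : 0 ≤ F 1 := by
    have := hFmono (left_mem_Icc.mpr zero_le_one) (right_mem_Icc.mpr zero_le_one) zero_le_one
    rwa [hF0] at this
  have hL0 : L 0 = a := by simp [hLdef]
  have hL1 : L 1 = b := by simp [hLdef, hw]
  have hg10 : g1 0 = fderiv ℝ η a (b - a) := by simp only [hg1def]; rw [hL0]
  simp only [hFdef, hL0, hL1, hg10] at hF1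
  nlinarith [hF1]

/-- Quantified interfacial entropy dissipation (Proposition 2.3). -/
theorem interfacial_entropy_dissipation
    (d m : ℕ) (hd : 1 ≤ d) (hm : 1 ≤ m)
    (Ω : Set (Rs m)) (hΩconv : Convex ℝ Ω) (hΩbdd : Bornology.IsBounded Ω)
    (f : Fin d → Rs m → Rs m)
    (hf : ∀ α, ∃ V : Set (Rs m), IsOpen V ∧ closure Ω ⊆ V ∧ ContDiffOn ℝ 2 (f α) V)
    (η : Rs m → ℝ) (ξ : Fin d → Rs m → ℝ)
    (hη : ∃ V : Set (Rs m), IsOpen V ∧ closure Ω ⊆ V ∧ ContDiffOn ℝ 2 η V)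
    (hξ : ∀ α, ∃ V : Set (Rs m), IsOpen V ∧ closure Ω ⊆ V ∧ ContDiffOn ℝ 2 (ξ α) V)
    (hηnn : ∀ u ∈ closure Ω, 0 ≤ η u)
    (β₀ β₁ : ℝ) (hβ₀ : 0 < β₀) (hββ : β₀ ≤ β₁)
    (hHess : ∀ u ∈ closure Ω, ∀ w : Rs m,
      β₀ * ‖w‖ ^ (2 : ℕ) ≤ fderiv ℝ (fderiv ℝ η) u w w ∧ fderiv ℝ (fderiv ℝ η) u w w ≤ β₁ * ‖w‖ ^ (2 : ℕ))
    (hξη : ∀ α, ∀ u ∈ Ω, fderiv ℝ (ξ α) u = (fderiv ℝ η u).comp (fderiv ℝ (f α) u))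
    (n : Rs d) (hn : ‖n‖ = 1) (lam : ℝ) (hlam : 0 < lam)
    (G : Rs m → Rs m → Rs m) (Ξ : Rs m → Rs m → ℝ)
    (hstab : ∀ u ∈ Ω, ∀ v ∈ Ω, u - (1 / lam) • (G u v - ∑ α, n α • f α u) ∈ Ω)
    (hineq : ∀ u ∈ Ω, ∀ v ∈ Ω,
      Ξ u v - ∑ α, n α * ξ α u ≤
        -lam * (η (u - (1 / lam) • (G u v - ∑ α, n α • f α u)) - η u)) :
    ∀ u ∈ Ω, ∀ v ∈ Ω,
      ((∑ α, n α * ξ α u) + fderiv ℝ η u (G u v - ∑ α, n α • f α u)) - Ξ u v ≥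
        β₀ / (2 * lam) * ‖G u v - ∑ α, n α • f α u‖ ^ (2 : ℕ)     := by
  intro u hu v hv
  obtain ⟨V, hVo, hclV, hηV⟩ := hη
  set w : Rs m := G u v - ∑ α, n α • f α u with hwdef
  set u' : Rs m := u - (1 / lam) • w with hu'def
  have hu' : u' ∈ Ω := hstab u hu v hv
  have key := strong_convex_lb η V hVo hηV β₀ Ω hΩconv (subset_closure.trans hclV)
    (fun x hx ww => (hHess x (subset_closure hx) ww).1) u u' hu hu'
  have hsub : u' - u = -((1 / lam) • w) := by rw [hu'def]; abel
  have hA : fderiv ℝ η u (u' - u) = -((1 / lam) * fderiv ℝ η u w) := by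
    rw [hsub, map_neg, _root_.map_smul, smul_eq_mul]
  have hN : ‖u' - u‖ ^ (2:ℕ) = (1 / lam) ^ 2 * ‖w‖ ^ (2:ℕ) := by
    rw [hsub, norm_neg, norm_smul, Real.norm_eq_abs, abs_of_pos (by positivity), mul_pow]
  rw [hA, hN] at key
  set A : ℝ := fderiv ℝ η u w
  set N : ℝ := ‖w‖ ^ (2:ℕ)
  have key2 : -A + β₀ / (2 * lam) * N ≤ lam * (η u' - η u) := by
    have h := mul_le_mul_of_nonneg_left
      (show -((1 / lam) * A) + β₀ / 2 * ((1 / lam) ^ 2 * N) ≤ η u' - η u by linarith) hlam.le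
    have e3 : lam * (-((1 / lam) * A) + β₀ / 2 * ((1 / lam) ^ 2 * N))
        = -A + β₀ / (2 * lam) * N := by field_simp
    linarith [e3 ▸ h]
  have hi := hineq u hu v hv
  rw [← hwdef, ← hu'def] at hi
  linarith
end
end

section
/- Preservation of the admissible states: assume Ω is moreover closed (hence compact), that u₀(x) ∈ Ω for a.e. x ∈ ℝ^d, and that the CFL condition (Δt/|K|) λ* Σ_{L∈𝒩(K)} |σ_KL| ≤ 1 holds for all K ∈ 𝒯. Then for every K ∈ 𝒯 and every n ∈ {0,…,N_T}, the value u_K^n produced by the finite volume scheme belongs to Ω. -/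
open MeasureTheory Metric Set
set_option autoImplicit false
set_option maxHeartbeats 1000000
noncomputable section

/-- A sub-convex combination together with the complementary weight on a base point
stays in a convex set. -/
lemma convex_comb_mem {E : Type*} [AddCommGroup E] [Module ℝ E]
    {s : Set E} (hs : Convex ℝ s) {ι : Type*} [DecidableEq ι] (t : Finset ι)
    (θ : ι → ℝ) (w : ι → E) (hθ : ∀ i ∈ t, 0 ≤ θ i) (hsum : ∑ i ∈ t, θ i ≤ 1)
    (u : E) (hu : u ∈ s) (hw : ∀ i ∈ t, w i ∈ s) :
    (1 - ∑ i ∈ t, θ i) • u + ∑ i ∈ t, θ i • w i ∈ s := by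
  classical
  set t' : Finset (Option ι) := insert none (t.image some) with ht'
  have hnone : (none : Option ι) ∉ t.image some := by simp
  have hinj : ∀ x ∈ t, ∀ y ∈ t, (some x : Option ι) = some y → x = y :=
    fun x _ y _ hxy => Option.some.inj hxy
  set W : Option ι → ℝ := fun o => o.elim (1 - ∑ i ∈ t, θ i) θ with hW
  set Z : Option ι → E := fun o => o.elim u w with hZ
  have hWsum : ∑ o ∈ t', W o = 1 := by
    rw [ht', Finset.sum_insert hnone, Finset.sum_image hinj]
    simp only [hW, Option.elim_none, Option.elim_some]
    ring
  have hW0 : ∀ o ∈ t', 0 ≤ W o := by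
    intro o ho
    rw [ht', Finset.mem_insert] at ho
    rcases ho with rfl | ho
    · simpa [hW] using sub_nonneg.2 hsum
    · obtain ⟨i, hi, rfl⟩ := Finset.mem_image.1 ho
      simpa [hW] using hθ i hi
  have hZmem : ∀ o ∈ t', Z o ∈ s := by
    intro o ho
    rw [ht', Finset.mem_insert] at ho
    rcases ho with rfl | ho
    · simpa [hZ] using hu
    · obtain ⟨i, hi, rfl⟩ := Finset.mem_image.1 ho
      simpa [hZ] using hw i hi
  have hmem := hs.sum_mem hW0 hWsum hZmem
  rw [ht', Finset.sum_insert hnone, Finset.sum_image hinj] at hmem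
  simpa only [hW, hZ, Option.elim_none, Option.elim_some] using hmem

/-- Preservation of the admissible states (Lemma 2.1). -/
theorem finite_volume_preserves_admissible_states
    (d m : ℕ) (hd : 1 ≤ d) (hm : 1 ≤ m)
    (Ω : Set (Rs m)) (hΩconv : Convex ℝ Ω) (hΩbdd : Bornology.IsBounded Ω)
    (f : Fin d → Rs m → Rs m)
    (hf : ∀ α, ∃ V : Set (Rs m), IsOpen V ∧ closure Ω ⊆ V ∧ ContDiffOn ℝ 2 (f α) V)
    (hΩcl : IsClosed Ω)
    (ι : Type) [DecidableEq ι] [Countable ι]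
    (Cc : ι → Set (Rs d))
    (hCopen : ∀ K, IsOpen (Cc K)) (hCbdd : ∀ K, Bornology.IsBounded (Cc K))
    (hCne : ∀ K, (Cc K).Nonempty)
    (hCdisj : Pairwise (Function.onFun Disjoint Cc))
    (hCcover : (⋃ K, closure (Cc K)) = Set.univ)
    (h : ℝ) (hh0 : 0 < h) (hh1 : h ≤ 1)
    (hdiam : ∀ K, Metric.diam (Cc K) ≤ h)
    (vol : ι → ℝ) (hvol : ∀ K, vol K = (volume (Cc K)).toReal)
    (Nb : ι → Finset ι) (hNsymm : ∀ K L, L ∈ Nb K ↔ K ∈ Nb L) (hNirr : ∀ K, K ∉ Nb K)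
    (A : ι → ι → ℝ) (hAsymm : ∀ K L, A K L = A L K) (hApos : ∀ K L, L ∈ Nb K → 0 < A K L)
    (ν : ι → ι → Rs d)
    (hνunit : ∀ K L, L ∈ Nb K → ‖ν K L‖ = 1)
    (hνanti : ∀ K L, L ∈ Nb K → ν L K = -ν K L)
    (hνsum : ∀ K, ∑ L ∈ Nb K, A K L • ν K L = 0)
    (a : ℝ) (ha : 0 < a)
    (hvolreg : ∀ K, a * h ^ d ≤ vol K)
    (hperim : ∀ K, ∑ L ∈ Nb K, A K L ≤ h ^ (d - 1) / a)
    (lam : ℝ) (hlam : 0 < lam)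
    (G : ι → ι → Rs m → Rs m → Rs m)
    (hGlip : ∀ K L, L ∈ Nb K → ∃ CG : NNReal,
      LipschitzOnWith CG (fun p : Rs m × Rs m => G K L p.1 p.2) (Ω ×ˢ Ω))
    (hGcons : ∀ K L, L ∈ Nb K → ∀ u ∈ Ω, ∀ v ∈ Ω, G K L u v = -G L K v u)
    (hGconsist : ∀ K L, L ∈ Nb K → ∀ u ∈ Ω, G K L u u = ∑ α, ν K L α • f α u)
    (hstab : ∀ lam' : ℝ, lam ≤ lam' → ∀ K L, L ∈ Nb K → ∀ u ∈ Ω, ∀ v ∈ Ω,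
      u - (1 / lam') • (G K L u v - ∑ α, ν K L α • f α u) ∈ Ω)
    (u₀ : Rs d → Rs m) (hu₀meas : Measurable u₀)
    (hu₀Ω : ∀ᵐ x ∂(volume : Measure (Rs d)), u₀ x ∈ Ω)
    (Δt : ℝ) (hΔt : 0 < Δt)
    (hu₀int : ∀ K, IntegrableOn u₀ (Cc K))
    (uK : ℕ → ι → Rs m)
    (hinit : ∀ K, uK 0 K = (vol K)⁻¹ • ∫ x in Cc K, u₀ x)
    (hstep : ∀ n K, (vol K) • (uK (n + 1) K - uK n K)
        + Δt • ∑ L ∈ Nb K, A K L • G K L (uK n K) (uK n L) = 0)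
    (hCFLcell : ∀ K, Δt / vol K * lam * ∑ L ∈ Nb K, A K L ≤ 1)
    (T : ℝ) (hT : 0 < T) :
    ∀ K, ∀ n ≤ Nat.floor (T / Δt + 1), uK n K ∈ Ω := by
  have hvK : ∀ K, 0 < vol K := fun K =>
    lt_of_lt_of_le (by positivity) (hvolreg K)
  -- strengthen: for all n, for all K, uK n K ∈ Ω
  suffices H : ∀ n K, uK n K ∈ Ω by
    intro K n _; exact H n K
  intro n
  induction n with
  | zero =>
    intro K
    have hne0 : volume (Cc K) ≠ 0 := by
      intro h0
      have : vol K = 0 := by rw [hvol K, h0]; simp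
      exact absurd this (ne_of_gt (hvK K))
    have hnetop : volume (Cc K) ≠ ⊤ := by
      intro h0
      have : vol K = 0 := by rw [hvol K, h0]; simp
      exact absurd this (ne_of_gt (hvK K))
    have hmem : (⨍ x in Cc K, u₀ x) ∈ Ω :=
      hΩconv.set_average_mem hΩcl hne0 hnetop
        (ae_restrict_of_ae hu₀Ω) (hu₀int K)
    rwa [hinit K, hvol K, ← measureReal_def, ← setAverage_eq]
  | succ n IH =>
    intro K
    set u := uK n K with hu
    have huΩ : u ∈ Ω := IH K
    set c : ℝ := Δt / vol K with hc
    have hc0 : 0 < c := div_pos hΔt (hvK K)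
    set F : ι → Rs m := fun L => ∑ α, ν K L α • f α u with hF
    set GG : ι → Rs m := fun L => G K L u (uK n L) with hGG
    -- the flux consistency cancellation
    have hzero : ∀ α : Fin d, ∑ L ∈ Nb K, A K L * ν K L α = 0 := by
      intro α
      have h0 := congrArg (EuclideanSpace.proj (𝕜 := ℝ) α) (hνsum K)
      simpa [map_sum, smul_eq_mul] using h0
    have hFsum : ∑ L ∈ Nb K, A K L • F L = 0 := by
      have e : ∀ L, A K L • F L = ∑ α, (A K L * ν K L α) • f α u := by
        intro L
        rw [hF]
        dsimp only
        rw [Finset.smul_sum]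
        exact Finset.sum_congr rfl fun α _ => (smul_smul _ _ _)
      calc ∑ L ∈ Nb K, A K L • F L
          = ∑ L ∈ Nb K, ∑ α, (A K L * ν K L α) • f α u :=
            Finset.sum_congr rfl fun L _ => e L
        _ = ∑ α, ∑ L ∈ Nb K, (A K L * ν K L α) • f α u := Finset.sum_comm
        _ = ∑ α, (∑ L ∈ Nb K, A K L * ν K L α) • f α u := by
            exact Finset.sum_congr rfl fun α _ => (Finset.sum_smul).symm
        _ = 0 := by simp [hzero]
    -- express uK (n+1) K
    have hnext : uK (n + 1) K = u - c • ∑ L ∈ Nb K, A K L • GG L := by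
      have h1 := hstep n K
      have h2 : vol K • (uK (n + 1) K - u) = -(Δt • ∑ L ∈ Nb K, A K L • GG L) :=
        eq_neg_of_add_eq_zero_left h1
      have h3 : (vol K)⁻¹ • (vol K • (uK (n + 1) K - u)) = uK (n + 1) K - u := by
        rw [smul_smul, inv_mul_cancel₀ (ne_of_gt (hvK K)), one_smul]
      rw [h2] at h3
      have h4 : uK (n + 1) K - u = -(c • ∑ L ∈ Nb K, A K L • GG L) := by
        rw [← h3, hc, div_eq_inv_mul, ← smul_smul, smul_neg]
      have h5 := eq_add_of_sub_eq h4
      rw [h5]; abel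
    set θ : ι → ℝ := fun L => c * lam * A K L with hθdef
    set w : ι → Rs m := fun L => u - (1 / lam) • (GG L - F L) with hw
    have hθnn : ∀ L ∈ Nb K, 0 ≤ θ L := fun L hL =>
      le_of_lt (by have := hApos K L hL; have := hc0; positivity)
    have hθsum : ∑ L ∈ Nb K, θ L ≤ 1 := by
      have e : ∑ L ∈ Nb K, θ L = Δt / vol K * lam * ∑ L ∈ Nb K, A K L := by
        rw [Finset.mul_sum]
      rw [e]; exact hCFLcell K
    have hwΩ : ∀ L ∈ Nb K, w L ∈ Ω := fun L hL =>
      hstab lam le_rfl K L hL u huΩ (uK n L) (IH L)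
    have e2 : ∑ L ∈ Nb K, θ L • w L
        = (∑ L ∈ Nb K, θ L) • u - c • (∑ L ∈ Nb K, A K L • GG L)
          + c • (∑ L ∈ Nb K, A K L • F L) := by
      rw [Finset.sum_smul, Finset.smul_sum, Finset.smul_sum,
        ← Finset.sum_sub_distrib, ← Finset.sum_add_distrib]
      refine Finset.sum_congr rfl fun L hL => ?_
      show θ L • w L = θ L • u - c • (A K L • GG L) + c • (A K L • F L)
      have hθl : θ L = c * lam * A K L := rfl
      have hwl : w L = u - (1 / lam) • (GG L - F L) := rfl
      rw [hθl, hwl]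
      have hlam' : lam ≠ 0 := ne_of_gt hlam
      match_scalars <;> field_simp <;> ring
    have key : uK (n + 1) K = (1 - ∑ L ∈ Nb K, θ L) • u + ∑ L ∈ Nb K, θ L • w L := by
      rw [hnext, e2, hFsum, smul_zero, add_zero]
      module
    rw [key]
    exact convex_comb_mem hΩconv (Nb K) θ w hθnn hθsum u huΩ hwΩ
end
end

section
/- Discrete entropy inequality: assume Ω is moreover closed, u₀(x) ∈ Ω for a.e. x, and that the CFL condition (Δt/|K|) λ* Σ_{L∈𝒩(K)} |σ_KL| ≤ 1 holds for all K ∈ 𝒯 (which is implied by Δt ≤ a²h/λ* under the mesh regularity). Then the discrete finite volume solution satisfies, for every K ∈ 𝒯 and every n ≥ 0: (|K|/Δt)(η(u_K^{n+1}) − η(u_K^n)) + Σ_{L∈𝒩(K)} |σ_KL| ξ_KL(u_K^n, u_L^n) ≤ 0. -/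
open MeasureTheory Metric Set
set_option autoImplicit false
set_option maxHeartbeats 1000000
noncomputable section

/-- If `∑ c L • V L = 0` in `Rs d`, then for any vectors `g α`,
`∑_L c L • (∑_α (V L) α • g α) = 0`. -/
lemma aux_sum_coord_zero {d : ℕ} {M : Type*} [AddCommGroup M] [Module ℝ M] {ι : Type*}
    (t : Finset ι) (c : ι → ℝ) (V : ι → Rs d)
    (hz : ∑ L ∈ t, c L • V L = 0) (g : Fin d → M) :
    ∑ L ∈ t, c L • (∑ α, (V L) α • g α) = 0 := by
  let T : Rs d →ₗ[ℝ] M :=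
    { toFun := fun z => ∑ α, z α • g α
      map_add' := by
        intro z z'
        simp [PiLp.add_apply, add_smul, Finset.sum_add_distrib]
      map_smul' := by
        intro r z
        simp [PiLp.smul_apply, smul_smul, Finset.smul_sum] }
  have h1 : ∑ L ∈ t, c L • (∑ α, (V L) α • g α) = T (∑ L ∈ t, c L • V L) := by
    rw [map_sum]
    refine Finset.sum_congr rfl fun L _ => ?_
    rw [_root_.map_smul]; rfl
  rw [h1, hz, map_zero]

/-- A `C²` function with nonnegative second derivative quadratic form on a convex set
contained in an open set is convex on that set. -/
lemma aux_convexOn_of_hess {m : ℕ} {Ω V : Set (Rs m)} (hΩ : Convex ℝ Ω) (hV : IsOpen V)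
    (hsub : Ω ⊆ V) {η : Rs m → ℝ} (hc : ContDiffOn ℝ 2 η V)
    (hpos : ∀ u ∈ Ω, ∀ w : Rs m, 0 ≤ fderiv ℝ (fderiv ℝ η) u w w) :
    ConvexOn ℝ Ω η := by
  have hd1 : ∀ x ∈ V, HasFDerivAt η (fderiv ℝ η x) x := fun x hx =>
    ((hc.contDiffAt (hV.mem_nhds hx)).differentiableAt (by norm_num)).hasFDerivAt
  have hF : ContDiffOn ℝ 1 (fderiv ℝ η) V := hc.fderiv_of_isOpen hV (by norm_num)
  have hd2 : ∀ x ∈ V, HasFDerivAt (fderiv ℝ η) (fderiv ℝ (fderiv ℝ η) x) x := fun x hx =>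
    ((hF.contDiffAt (hV.mem_nhds hx)).differentiableAt (by norm_num)).hasFDerivAt
  refine ⟨hΩ, ?_⟩
  intro x hx y hy aa b ha hb hab
  set p : ℝ → Rs m := fun t => x + t • (y - x) with hp_def
  have hpc : ∀ t, p t = (1 - t) • x + t • y := by
    intro t
    simp only [hp_def]
    module
  have hpΩ : ∀ t ∈ Icc (0:ℝ) 1, p t ∈ Ω := by
    intro t ht
    rw [hpc]
    exact hΩ hx hy (by linarith [ht.2]) ht.1 (by ring)
  have hp' : ∀ t : ℝ, HasDerivAt p (y - x) t := by
    intro t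
    have h1 : HasDerivAt (fun s : ℝ => s • (y - x)) ((1:ℝ) • (y - x)) t :=
      (hasDerivAt_id t).smul_const (y - x)
    have h2 := h1.const_add x
    rw [one_smul] at h2
    exact h2
  have hIoo : interior (Icc (0:ℝ) 1) = Ioo 0 1 := interior_Icc
  have key : ConvexOn ℝ (Icc (0:ℝ) 1) (fun t => η (p t)) := by
    apply convexOn_of_hasDerivWithinAt2_nonneg (f' := fun t => fderiv ℝ η (p t) (y - x))
      (f'' := fun t => fderiv ℝ (fderiv ℝ η) (p t) (y - x) (y - x)) (convex_Icc 0 1)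
    · -- continuity
      apply hc.continuousOn.comp
      · exact Continuous.continuousOn (by continuity)
      · intro t ht
        exact hsub (hpΩ t ht)
    · intro t ht
      rw [hIoo] at ht
      have hmem : p t ∈ V := hsub (hpΩ t (Ioo_subset_Icc_self ht))
      exact ((hd1 _ hmem).comp_hasDerivAt t (hp' t)).hasDerivWithinAt
    · intro t ht
      rw [hIoo] at ht
      have hmem : p t ∈ V := hsub (hpΩ t (Ioo_subset_Icc_self ht))
      have h1 : HasDerivAt (fun s => fderiv ℝ η (p s))
          (fderiv ℝ (fderiv ℝ η) (p t) (y - x)) t :=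
        (hd2 _ hmem).comp_hasDerivAt t (hp' t)
      have h2 := h1.clm_apply (hasDerivAt_const t (y - x))
      simp only [map_zero, add_zero] at h2
      exact h2.hasDerivWithinAt
    · intro t ht
      rw [hIoo] at ht
      exact hpos _ (hpΩ t (Ioo_subset_Icc_self ht)) (y - x)
  have h01 : (0:ℝ) ∈ Icc (0:ℝ) 1 := by constructor <;> norm_num
  have h11 : (1:ℝ) ∈ Icc (0:ℝ) 1 := by constructor <;> norm_num
  have := key.2 h01 h11 ha hb hab
  simp only [smul_eq_mul, mul_zero, mul_one, zero_add] at this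
  have e0 : p 0 = x := by rw [hpc]; simp
  have e1 : p 1 = y := by rw [hpc]; simp
  have eb : p b = aa • x + b • y := by
    rw [hpc]
    have : (1 : ℝ) - b = aa := by linarith
    rw [this]
  rw [e0, e1, eb] at this
  exact this


/-- Discrete entropy inequality (Proposition 2.2, second part). -/
theorem discrete_entropy_inequality
    (d m : ℕ) (hd : 1 ≤ d) (hm : 1 ≤ m)
    (Ω : Set (Rs m)) (hΩconv : Convex ℝ Ω) (hΩbdd : Bornology.IsBounded Ω)
    (f : Fin d → Rs m → Rs m)
    (hf : ∀ α, ∃ V : Set (Rs m), IsOpen V ∧ closure Ω ⊆ V ∧ ContDiffOn ℝ 2 (f α) V)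
    (hΩcl : IsClosed Ω)
    (η : Rs m → ℝ) (ξ : Fin d → Rs m → ℝ)
    (hη : ∃ V : Set (Rs m), IsOpen V ∧ closure Ω ⊆ V ∧ ContDiffOn ℝ 2 η V)
    (hξ : ∀ α, ∃ V : Set (Rs m), IsOpen V ∧ closure Ω ⊆ V ∧ ContDiffOn ℝ 2 (ξ α) V)
    (hηnn : ∀ u ∈ closure Ω, 0 ≤ η u)
    (β₀ β₁ : ℝ) (hβ₀ : 0 < β₀) (hββ : β₀ ≤ β₁)
    (hHess : ∀ u ∈ closure Ω, ∀ w : Rs m,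
      β₀ * ‖w‖ ^ (2 : ℕ) ≤ fderiv ℝ (fderiv ℝ η) u w w ∧ fderiv ℝ (fderiv ℝ η) u w w ≤ β₁ * ‖w‖ ^ (2 : ℕ))
    (hξη : ∀ α, ∀ u ∈ Ω, fderiv ℝ (ξ α) u = (fderiv ℝ η u).comp (fderiv ℝ (f α) u))
    (ι : Type) [DecidableEq ι] [Countable ι]
    (Cc : ι → Set (Rs d))
    (hCopen : ∀ K, IsOpen (Cc K)) (hCbdd : ∀ K, Bornology.IsBounded (Cc K))
    (hCne : ∀ K, (Cc K).Nonempty)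
    (hCdisj : Pairwise (Function.onFun Disjoint Cc))
    (hCcover : (⋃ K, closure (Cc K)) = Set.univ)
    (h : ℝ) (hh0 : 0 < h) (hh1 : h ≤ 1)
    (hdiam : ∀ K, Metric.diam (Cc K) ≤ h)
    (vol : ι → ℝ) (hvol : ∀ K, vol K = (volume (Cc K)).toReal)
    (Nb : ι → Finset ι) (hNsymm : ∀ K L, L ∈ Nb K ↔ K ∈ Nb L) (hNirr : ∀ K, K ∉ Nb K)
    (A : ι → ι → ℝ) (hAsymm : ∀ K L, A K L = A L K) (hApos : ∀ K L, L ∈ Nb K → 0 < A K L)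
    (ν : ι → ι → Rs d)
    (hνunit : ∀ K L, L ∈ Nb K → ‖ν K L‖ = 1)
    (hνanti : ∀ K L, L ∈ Nb K → ν L K = -ν K L)
    (hνsum : ∀ K, ∑ L ∈ Nb K, A K L • ν K L = 0)
    (a : ℝ) (ha : 0 < a)
    (hvolreg : ∀ K, a * h ^ d ≤ vol K)
    (hperim : ∀ K, ∑ L ∈ Nb K, A K L ≤ h ^ (d - 1) / a)
    (lam : ℝ) (hlam : 0 < lam)
    (G : ι → ι → Rs m → Rs m → Rs m)
    (hGlip : ∀ K L, L ∈ Nb K → ∃ CG : NNReal,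
      LipschitzOnWith CG (fun p : Rs m × Rs m => G K L p.1 p.2) (Ω ×ˢ Ω))
    (hGcons : ∀ K L, L ∈ Nb K → ∀ u ∈ Ω, ∀ v ∈ Ω, G K L u v = -G L K v u)
    (hGconsist : ∀ K L, L ∈ Nb K → ∀ u ∈ Ω, G K L u u = ∑ α, ν K L α • f α u)
    (hstab : ∀ lam' : ℝ, lam ≤ lam' → ∀ K L, L ∈ Nb K → ∀ u ∈ Ω, ∀ v ∈ Ω,
      u - (1 / lam') • (G K L u v - ∑ α, ν K L α • f α u) ∈ Ω)
    (Ξ : ι → ι → Rs m → Rs m → ℝ)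
    (hΞlip : ∀ K L, L ∈ Nb K → ∃ CΞ : NNReal,
      LipschitzOnWith CΞ (fun p : Rs m × Rs m => Ξ K L p.1 p.2) (Ω ×ˢ Ω))
    (hΞcons : ∀ K L, L ∈ Nb K → ∀ u ∈ Ω, ∀ v ∈ Ω, Ξ K L u v = -Ξ L K v u)
    (hΞineq : ∀ lam' : ℝ, lam ≤ lam' → ∀ K L, L ∈ Nb K → ∀ u ∈ Ω, ∀ v ∈ Ω,
      Ξ K L u v - ∑ α, ν K L α * ξ α u ≤
        -lam' * (η (u - (1 / lam') • (G K L u v - ∑ α, ν K L α • f α u)) - η u))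
    (u₀ : Rs d → Rs m) (hu₀meas : Measurable u₀)
    (hu₀Ω : ∀ᵐ x ∂(volume : Measure (Rs d)), u₀ x ∈ Ω)
    (Δt : ℝ) (hΔt : 0 < Δt)
    (hu₀int : ∀ K, IntegrableOn u₀ (Cc K))
    (uK : ℕ → ι → Rs m)
    (hinit : ∀ K, uK 0 K = (vol K)⁻¹ • ∫ x in Cc K, u₀ x)
    (hstep : ∀ n K, (vol K) • (uK (n + 1) K - uK n K)
        + Δt • ∑ L ∈ Nb K, A K L • G K L (uK n K) (uK n L) = 0)
    (hCFLcell : ∀ K, Δt / vol K * lam * ∑ L ∈ Nb K, A K L ≤ 1) :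
    ∀ K n, vol K / Δt * (η (uK (n + 1) K) - η (uK n K))
        + ∑ L ∈ Nb K, A K L * Ξ K L (uK n K) (uK n L) ≤ 0 := by
  intro K n
  have hlamne : lam ≠ 0 := ne_of_gt hlam
  have hΔtne : Δt ≠ 0 := ne_of_gt hΔt
  have hvK : ∀ J, 0 < vol J := fun J => lt_of_lt_of_le (by positivity) (hvolreg J)
  have hvKne : ∀ J, vol J ≠ 0 := fun J => ne_of_gt (hvK J)
  obtain ⟨V, hVopen, hVsub, hηC⟩ := hη
  have hΩV : Ω ⊆ V := fun u hu => hVsub (subset_closure hu)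
  have hconv : ConvexOn ℝ Ω η := by
    refine aux_convexOn_of_hess hΩconv hVopen hΩV hηC ?_
    intro u hu w
    exact le_trans (by positivity) (hHess u (subset_closure hu) w).1
  -- the key convex-combination step
  have hkey : ∀ n' K', (∀ J, uK n' J ∈ Ω) →
      uK (n' + 1) K' ∈ Ω ∧
      η (uK (n' + 1) K') ≤ (1 - ∑ L ∈ Nb K', Δt / vol K' * lam * A K' L) * η (uK n' K')
        + ∑ L ∈ Nb K', Δt / vol K' * lam * A K' L *
            η (uK n' K' - (1/lam) • (G K' L (uK n' K') (uK n' L)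
              - ∑ α, ν K' L α • f α (uK n' K'))) := by
    intro n' K' hΩn
    set u : Rs m := uK n' K' with hu_def
    set c : ι → ℝ := fun L => Δt / vol K' * lam * A K' L with hc_def
    set v : ι → Rs m := fun L =>
      u - (1/lam) • (G K' L u (uK n' L) - ∑ α, ν K' L α • f α u) with hv_def
    set S : ℝ := ∑ L ∈ Nb K', c L with hS_def
    have hvmem : ∀ L ∈ Nb K', v L ∈ Ω := fun L hL =>
      hstab lam le_rfl K' L hL u (hΩn K') (uK n' L) (hΩn L)
    have hcnn : ∀ L ∈ Nb K', 0 ≤ c L := by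
      intro L hL
      have := (hApos K' L hL).le
      have h1 := (hvK K').le
      simp only [hc_def]
      positivity
    have hS1 : S ≤ 1 := by
      have : S = Δt / vol K' * lam * ∑ L ∈ Nb K', A K' L := by
        rw [hS_def, hc_def, ← Finset.mul_sum]
      rw [this]
      exact hCFLcell K'
    -- representation of uK (n'+1) K'
    have hstep' : uK (n' + 1) K'
        = u - (Δt / vol K') • ∑ L ∈ Nb K', A K' L • G K' L u (uK n' L) := by
      have h0 := hstep n' K'
      have h1 : vol K' • (uK (n' + 1) K' - u)
          = -(Δt • ∑ L ∈ Nb K', A K' L • G K' L u (uK n' L)) :=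
        eq_neg_of_add_eq_zero_left h0
      have h2 : uK (n' + 1) K' - u
          = (vol K')⁻¹ • (vol K' • (uK (n' + 1) K' - u)) := (inv_smul_smul₀ (hvKne K') _).symm
      rw [h1] at h2
      have h3 := sub_eq_iff_eq_add.mp h2
      rw [h3, smul_neg, smul_smul]
      have hsc : (vol K')⁻¹ * Δt = Δt / vol K' := by field_simp
      rw [hsc]
      abel
    have hz : ∑ L ∈ Nb K', A K' L • (∑ α, ν K' L α • f α u) = 0 :=
      aux_sum_coord_zero (Nb K') (A K') (ν K') (hνsum K') (fun α => f α u)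
    have hterm : ∀ L ∈ Nb K', c L • v L
        = c L • u - (Δt / vol K') • (A K' L • G K' L u (uK n' L))
          + (Δt / vol K') • (A K' L • (∑ α, ν K' L α • f α u)) := by
      intro L hL
      simp only [hv_def, hc_def]
      match_scalars <;> field_simp [hlamne, hvKne K'] <;> ring
    have hrep : uK (n' + 1) K' = (1 - S) • u + ∑ L ∈ Nb K', c L • v L := by
      rw [hstep', Finset.sum_congr rfl hterm, Finset.sum_add_distrib,
        Finset.sum_sub_distrib, ← Finset.sum_smul, ← Finset.smul_sum, ← Finset.smul_sum,
        hz, smul_zero, add_zero, sub_smul, one_smul, ← hS_def]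
      abel
    -- convex combination over `insert K' (Nb K')`
    have hKnotin : K' ∉ Nb K' := hNirr K'
    set W : ι → ℝ := fun L => if L = K' then 1 - S else c L with hW_def
    set P : ι → Rs m := fun L => if L = K' then u else v L with hP_def
    have hWnb : ∀ L ∈ Nb K', W L = c L := by
      intro L hL
      have hLK : L ≠ K' := fun e => hKnotin (e ▸ hL)
      simp [hW_def, if_neg hLK]
    have hPnb : ∀ L ∈ Nb K', P L = v L := by
      intro L hL
      have hLK : L ≠ K' := fun e => hKnotin (e ▸ hL)
      simp [hP_def, if_neg hLK]
    have hsum_ins : ∑ L ∈ insert K' (Nb K'), W L • P L = (1 - S) • u + ∑ L ∈ Nb K', c L • v L := by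
      rw [Finset.sum_insert hKnotin]
      have h1 : W K' • P K' = (1 - S) • u := by simp [hW_def, hP_def]
      rw [h1]
      congr 1
      exact Finset.sum_congr rfl fun L hL => by rw [hWnb L hL, hPnb L hL]
    have hWsum : ∑ L ∈ insert K' (Nb K'), W L = 1 := by
      rw [Finset.sum_insert hKnotin]
      have h1 : ∑ L ∈ Nb K', W L = S := by
        rw [hS_def]; exact Finset.sum_congr rfl hWnb
      rw [h1]
      simp [hW_def]
    have hWnn : ∀ L ∈ insert K' (Nb K'), 0 ≤ W L := by
      intro L hL
      rcases Finset.mem_insert.mp hL with hLK | hLN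
      · simp only [hW_def, hLK, if_pos rfl]
        linarith
      · rw [hWnb L hLN]; exact hcnn L hLN
    have hPmem : ∀ L ∈ insert K' (Nb K'), P L ∈ Ω := by
      intro L hL
      rcases Finset.mem_insert.mp hL with hLK | hLN
      · simp only [hP_def, hLK, if_pos rfl]; exact hΩn K'
      · rw [hPnb L hLN]; exact hvmem L hLN
    constructor
    · rw [hrep, ← hsum_ins]
      exact hΩconv.sum_mem hWnn hWsum hPmem
    · have hJ := hconv.map_sum_le hWnn hWsum hPmem
      rw [hsum_ins, ← hrep, Finset.sum_insert hKnotin] at hJ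
      simp only [smul_eq_mul] at hJ
      have h1 : W K' * η (P K') = (1 - S) * η u := by simp [hW_def, hP_def]
      have h2 : ∑ L ∈ Nb K', W L * η (P L) = ∑ L ∈ Nb K', c L * η (v L) :=
        Finset.sum_congr rfl fun L hL => by rw [hWnb L hL, hPnb L hL]
      rw [h1, h2] at hJ
      exact hJ
  -- membership for all times
  have hmem : ∀ n' K', uK n' K' ∈ Ω := by
    intro n'
    induction n' with
    | zero =>
      intro K'
      rw [hinit K', hvol K']
      have hμ0 : volume (Cc K') ≠ 0 := ((hCopen K').measure_pos volume (hCne K')).ne'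
      have hμt : volume (Cc K') ≠ ⊤ := (hCbdd K').measure_lt_top.ne
      have havg := hΩconv.set_average_mem hΩcl hμ0 hμt (ae_restrict_of_ae hu₀Ω) (hu₀int K')
      rwa [setAverage_eq] at havg
    | succ n' ih =>
      intro K'
      exact (hkey n' K' ih).1
  -- now the entropy inequality for the fixed K, n
  set u : Rs m := uK n K with hu_def
  set c : ι → ℝ := fun L => Δt / vol K * lam * A K L with hc_def
  set v : ι → Rs m := fun L =>
    u - (1/lam) • (G K L u (uK n L) - ∑ α, ν K L α • f α u) with hv_def
  set S : ℝ := ∑ L ∈ Nb K, c L with hS_def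
  have hη' : η (uK (n + 1) K) ≤ (1 - S) * η u + ∑ L ∈ Nb K, c L * η (v L) :=
    (hkey n K (fun J => hmem n J)).2
  -- per-interface entropy flux inequality
  have hone : ∀ L ∈ Nb K, A K L * (lam * (η (v L) - η u))
      ≤ A K L * (∑ α, ν K L α * ξ α u) - A K L * Ξ K L u (uK n L) := by
    intro L hL
    have h1 : Ξ K L u (uK n L) - ∑ α, ν K L α * ξ α u ≤ -lam * (η (v L) - η u) :=
      hΞineq lam le_rfl K L hL u (hmem n K) (uK n L) (hmem n L)
    have h2 : lam * (η (v L) - η u) ≤ (∑ α, ν K L α * ξ α u) - Ξ K L u (uK n L) := by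
      linarith
    have h3 := mul_le_mul_of_nonneg_left h2 (hApos K L hL).le
    nlinarith [h3]
  have hzero : ∑ L ∈ Nb K, A K L * (∑ α, ν K L α * ξ α u) = 0 := by
    have := aux_sum_coord_zero (Nb K) (A K) (ν K) (hνsum K) (fun α => ξ α u)
    simpa [smul_eq_mul] using this
  have hsum1 : ∑ L ∈ Nb K, A K L * (lam * (η (v L) - η u))
      ≤ - ∑ L ∈ Nb K, A K L * Ξ K L u (uK n L) := by
    calc ∑ L ∈ Nb K, A K L * (lam * (η (v L) - η u))
        ≤ ∑ L ∈ Nb K, (A K L * (∑ α, ν K L α * ξ α u) - A K L * Ξ K L u (uK n L)) :=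
          Finset.sum_le_sum hone
      _ = ∑ L ∈ Nb K, A K L * (∑ α, ν K L α * ξ α u)
            - ∑ L ∈ Nb K, A K L * Ξ K L u (uK n L) := Finset.sum_sub_distrib _ _
      _ = - ∑ L ∈ Nb K, A K L * Ξ K L u (uK n L) := by rw [hzero]; ring
  have hdiff : η (uK (n + 1) K) - η u ≤ ∑ L ∈ Nb K, c L * (η (v L) - η u) := by
    have hexp : ∑ L ∈ Nb K, c L * (η (v L) - η u)
        = ∑ L ∈ Nb K, c L * η (v L) - S * η u := by
      simp only [mul_sub]
      rw [Finset.sum_sub_distrib, ← Finset.sum_mul, ← hS_def]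
    rw [hexp]
    nlinarith [hη']
  have hfin : vol K / Δt * (η (uK (n + 1) K) - η u)
      ≤ ∑ L ∈ Nb K, A K L * (lam * (η (v L) - η u)) := by
    have h1 := mul_le_mul_of_nonneg_left hdiff (le_of_lt (div_pos (hvK K) hΔt))
    have h2 : vol K / Δt * ∑ L ∈ Nb K, c L * (η (v L) - η u)
        = ∑ L ∈ Nb K, A K L * (lam * (η (v L) - η u)) := by
      rw [Finset.mul_sum]
      refine Finset.sum_congr rfl fun L hL => ?_
      simp only [hc_def]
      field_simp [hvKne K, hΔtne]
    rw [h2] at h1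
    exact h1
  have := le_trans hfin hsum1
  linarith [this]
end
end

section
/- Bound of the relative entropy fluxes by the relative entropy: for every α ∈ {1,…,d} and all u, v ∈ Ω: |Q_α(v,u)| ≤ L_f H(v,u). -/
open MeasureTheory Metric Set
set_option autoImplicit false
set_option maxHeartbeats 1000000
noncomputable section

section aux
variable {E F : Type*} [NormedAddCommGroup E] [NormedSpace ℝ E]
  [NormedAddCommGroup F] [NormedSpace ℝ F]

lemma aux_mono {G G' : ℝ → ℝ} {a b : ℝ} (hab : a ≤ b)
    (hG : ∀ t ∈ Icc a b, HasDerivAt G (G' t) t)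
    (hG' : ∀ t ∈ Icc a b, 0 ≤ G' t) : G a ≤ G b := by
  have : MonotoneOn G (Icc a b) := by
    apply monotoneOn_of_hasDerivWithinAt_nonneg (f' := G') (convex_Icc a b)
      (fun t ht => (hG t ht).continuousAt.continuousWithinAt)
    · intro t ht
      rw [interior_Icc] at ht
      exact (hG t (Ioo_subset_Icc_self ht)).hasDerivWithinAt
    · intro t ht
      rw [interior_Icc] at ht
      exact hG' t (Ioo_subset_Icc_self ht)
  exact this (left_mem_Icc.2 hab) (right_mem_Icc.2 hab) hab

lemma aux_fd1 {g : E → F} {V : Set E} (hV : IsOpen V) (hg : ContDiffOn ℝ 2 g V)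
    {x : E} (hx : x ∈ V) : HasFDerivAt g (fderiv ℝ g x) x :=
  ((hg.contDiffAt (hV.mem_nhds hx)).differentiableAt (by norm_num)).hasFDerivAt

lemma aux_fd2 {g : E → F} {V : Set E} (hV : IsOpen V) (hg : ContDiffOn ℝ 2 g V)
    {x : E} (hx : x ∈ V) :
    HasFDerivAt (fderiv ℝ g) (fderiv ℝ (fderiv ℝ g) x) x :=
  (((hg.contDiffAt (hV.mem_nhds hx)).fderiv_right (m := 1) (by norm_num)).differentiableAt
    (by norm_num)).hasFDerivAt

lemma aux_symm {g : E → F} {V : Set E} (hV : IsOpen V) (hg : ContDiffOn ℝ 2 g V)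
    {x : E} (hx : x ∈ V) (y z : E) :
    fderiv ℝ (fderiv ℝ g) x y z = fderiv ℝ (fderiv ℝ g) x z y :=
  ((hg.contDiffAt (hV.mem_nhds hx)).isSymmSndFDerivAt (by norm_num)) y z

end aux

/-- Bound of the relative entropy fluxes by the relative entropy (inequality (4.8)):
`|Q_α(v,u)| ≤ L_f H(v,u)`, stated for any constant `s` dominating the Rayleigh
quotients defining `L_f`. -/
theorem relative_entropy_flux_bound
    (d m : ℕ) (hd : 1 ≤ d) (hm : 1 ≤ m)
    (Ω : Set (Rs m)) (hΩconv : Convex ℝ Ω) (hΩbdd : Bornology.IsBounded Ω)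
    (f : Fin d → Rs m → Rs m)
    (hf : ∀ α, ∃ V : Set (Rs m), IsOpen V ∧ closure Ω ⊆ V ∧ ContDiffOn ℝ 2 (f α) V)
    (η : Rs m → ℝ) (ξ : Fin d → Rs m → ℝ)
    (hη : ∃ V : Set (Rs m), IsOpen V ∧ closure Ω ⊆ V ∧ ContDiffOn ℝ 2 η V)
    (hξ : ∀ α, ∃ V : Set (Rs m), IsOpen V ∧ closure Ω ⊆ V ∧ ContDiffOn ℝ 2 (ξ α) V)
    (hηnn : ∀ u ∈ closure Ω, 0 ≤ η u)
    (β₀ β₁ : ℝ) (hβ₀ : 0 < β₀) (hββ : β₀ ≤ β₁)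
    (hHess : ∀ u ∈ closure Ω, ∀ w : Rs m,
      β₀ * ‖w‖ ^ (2 : ℕ) ≤ fderiv ℝ (fderiv ℝ η) u w w ∧ fderiv ℝ (fderiv ℝ η) u w w ≤ β₁ * ‖w‖ ^ (2 : ℕ))
    (hξη : ∀ α, ∀ u ∈ Ω, fderiv ℝ (ξ α) u = (fderiv ℝ η u).comp (fderiv ℝ (f α) u))
    (s : ℝ)
    (hs : ∀ α, ∀ u ∈ Ω, ∀ v ∈ Ω, ∀ w : Rs m,
      |fderiv ℝ (fderiv ℝ η) v (fderiv ℝ (f α) u w) w|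
        ≤ s * fderiv ℝ (fderiv ℝ η) v w w) :
    ∀ α : Fin d, ∀ u ∈ Ω, ∀ v ∈ Ω,
      |ξ α v - ξ α u - fderiv ℝ η u (f α v - f α u)|
        ≤ s * (η v - η u - fderiv ℝ η u (v - u)) := by
  intro α u hu v hv
  obtain ⟨Vη, hVηo, hVηs, hηC⟩ := hη
  obtain ⟨Vf, hVfo, hVfs, hfC⟩ := hf α
  obtain ⟨Vξ, hVξo, hVξs, hξC⟩ := hξ α
  have hΩV : ∀ {W : Set (Rs m)} {x : Rs m}, closure Ω ⊆ W → x ∈ Ω → x ∈ W :=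
    fun hW hx => hW (subset_closure hx)
  set w : Rs m := v - u with hw
  set γ : ℝ → Rs m := fun t => u + t • w with hγ
  have hγd : ∀ t : ℝ, HasDerivAt γ w t := by
    intro t
    have h := ((hasDerivAt_id t).smul_const w).const_add u
    rw [one_smul] at h
    exact h
  have hγmem : ∀ t ∈ Icc (0:ℝ) 1, γ t ∈ Ω := by
    intro t ht
    have : γ t = (1 - t) • u + t • v := by
      simp only [hγ, hw]
      module
    rw [this]
    exact hΩconv hu hv (by linarith [ht.2]) ht.1 (by ring)
  -- key inner estimate
  have key : ∀ t ∈ Icc (0:ℝ) 1, ∀ z : Rs m,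
      (∀ x ∈ Ω, |fderiv ℝ (fderiv ℝ η) x z w| ≤ s * fderiv ℝ (fderiv ℝ η) x w w) →
      |fderiv ℝ η (γ t) z - fderiv ℝ η u z|
        ≤ s * (fderiv ℝ η (γ t) w - fderiv ℝ η u w) := by
    intro t ht z hz
    have main : ∀ ε : ℝ, ε = 1 ∨ ε = -1 →
        ε * (fderiv ℝ η (γ t) z - fderiv ℝ η u z)
          ≤ s * (fderiv ℝ η (γ t) w - fderiv ℝ η u w) := by
      intro ε hε
      have h01 : Icc (0:ℝ) t ⊆ Icc 0 1 := Icc_subset_Icc le_rfl ht.2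
      have := aux_mono (G := fun σ => s * (fderiv ℝ η (γ σ) w) - ε * (fderiv ℝ η (γ σ) z))
        (G' := fun σ => s * (fderiv ℝ (fderiv ℝ η) (γ σ) w w)
          - ε * (fderiv ℝ (fderiv ℝ η) (γ σ) w z)) (a := 0) (b := t) ht.1
        (by
          intro σ hσ
          have hmem := hγmem σ (h01 hσ)
          have hVm : γ σ ∈ Vη := hΩV hVηs hmem
          have hd2 : HasFDerivAt (fderiv ℝ η) (fderiv ℝ (fderiv ℝ η) (γ σ)) (γ σ) :=
            aux_fd2 hVηo hηC hVm
          have hcomp := hd2.comp_hasDerivAt σ (hγd σ)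
          have h1 : HasDerivAt (fun σ' => fderiv ℝ η (γ σ') w)
              (fderiv ℝ (fderiv ℝ η) (γ σ) w w) σ := by
            simpa using hcomp.clm_apply (hasDerivAt_const σ w)
          have h2 : HasDerivAt (fun σ' => fderiv ℝ η (γ σ') z)
              (fderiv ℝ (fderiv ℝ η) (γ σ) w z) σ := by
            simpa using hcomp.clm_apply (hasDerivAt_const σ z)
          exact (h1.const_mul s).sub (h2.const_mul ε))
        (by
          intro σ hσ
          have hmem := hγmem σ (h01 hσ)
          have hVm : γ σ ∈ Vη := hΩV hVηs hmem
          have hsymm := aux_symm hVηo hηC hVm w z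
          rw [hsymm]
          have habs := abs_le.1 (hz (γ σ) hmem)
          rcases hε with h | h <;> rw [h] <;> linarith [habs.1, habs.2])
      simp only [hγ, zero_smul, add_zero] at this
      linarith
    exact abs_le.2 ⟨by linarith [main (-1) (Or.inr rfl)], by linarith [main 1 (Or.inl rfl)]⟩
  -- outer comparison
  have houter : ∀ ε : ℝ, ε = 1 ∨ ε = -1 →
      ε * (ξ α v - ξ α u - fderiv ℝ η u (f α v - f α u))
        ≤ s * (η v - η u - fderiv ℝ η u (v - u)) := by
    intro ε hε
    have := aux_mono
      (G := fun t => s * (η (γ t) - η u - t * (fderiv ℝ η u w))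
        - ε * (ξ α (γ t) - ξ α u - fderiv ℝ η u (f α (γ t) - f α u)))
      (G' := fun t => s * (fderiv ℝ η (γ t) w - fderiv ℝ η u w)
        - ε * (fderiv ℝ η (γ t) (fderiv ℝ (f α) (γ t) w)
          - fderiv ℝ η u (fderiv ℝ (f α) (γ t) w)))
      (a := 0) (b := 1) zero_le_one
      (by
        intro t ht
        have hmem := hγmem t ht
        have hη1 : HasDerivAt (fun t' => η (γ t')) (fderiv ℝ η (γ t) w) t :=
          (aux_fd1 hVηo hηC (hΩV hVηs hmem)).comp_hasDerivAt t (hγd t)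
        have hξ1 : HasDerivAt (fun t' => ξ α (γ t'))
            (fderiv ℝ η (γ t) (fderiv ℝ (f α) (γ t) w)) t := by
          have := (aux_fd1 hVξo hξC (hΩV hVξs hmem)).comp_hasDerivAt t (hγd t)
          rwa [hξη α (γ t) hmem] at this
        have hfγ : HasDerivAt (fun t' => f α (γ t')) (fderiv ℝ (f α) (γ t) w) t :=
          (aux_fd1 hVfo hfC (hΩV hVfs hmem)).comp_hasDerivAt t (hγd t)
        have hlin : HasDerivAt (fun t' => fderiv ℝ η u (f α (γ t') - f α u))
            (fderiv ℝ η u (fderiv ℝ (f α) (γ t) w)) t := by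
          have := (fderiv ℝ η u).hasFDerivAt.comp_hasDerivAt t (hfγ.sub_const (f α u))
          simpa [Function.comp_def] using this
        have hlt : HasDerivAt (fun t' : ℝ => t' * (fderiv ℝ η u w)) (fderiv ℝ η u w) t := by
          simpa using (hasDerivAt_id t).mul_const (fderiv ℝ η u w)
        exact (((hη1.sub_const (η u)).sub hlt).const_mul s).sub
          ((((hξ1.sub_const (ξ α u)).sub hlin)).const_mul ε))
      (by
        intro t ht
        have hmem := hγmem t ht
        have hk := key t ht (fderiv ℝ (f α) (γ t) w)
          (fun x hx => hs α (γ t) hmem x hx w)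
        have h1 := abs_le.1 hk
        rcases hε with h | h <;> rw [h] <;> linarith [h1.1, h1.2])
    have hγ0 : γ 0 = u := by simp [hγ]
    have hγ1 : γ 1 = v := by simp [hγ, hw]
    simp only [hγ0, hγ1] at this
    have h1 : fderiv ℝ η u w = fderiv ℝ η u (v - u) := by rw [hw]
    simp only [sub_self, map_zero, mul_zero, sub_zero, zero_mul, mul_zero] at this
    nlinarith [this]
  exact abs_le.2 ⟨by linarith [houter (-1) (Or.inr rfl)], by linarith [houter 1 (Or.inl rfl)]⟩
end
end
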